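/- Let P₁, P₂ be finite bounded posets with |P₁|, |P₂| > 2. Let Q be the poset obtained from the product (P₁ \ {0̂₁,1̂₁}) × (P₂ \ {0̂₂,1̂₂}) by adjoining a new least element 0̂_Q and new greatest element 1̂_Q. Let A be a nonempty subset of Q \ {0̂_Q, 1̂_Q}, and let A↾₁ = {a₁ : (a₁,a₂) ∈ A}, A↾₂ = {a₂ : (a₁,a₂) ∈ A}. If min I(P₁, A↾₁) ≠ {1̂₁} and min I(P₂, A↾₂) ≠ {1̂₂}, then I(Q,A) = ((I(P₁,A↾₁) \ {1̂₁}) × (I(P₂,A↾₂) \ {1̂₂})) ∪ {1̂_Q}, and min I(Q,A) = min I(P₁,A↾₁) × min I(P₂,A↾₂). -/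

import Mathlib

open scoped Classical
open Set

/-- The order filter generated by a subset. -/
def upFilter (P : Type*) [Preorder P] (S : Set P) : Set P := {x | ∃ s ∈ S, s ≤ x}

/-- The set of minimal elements of a subset. -/
def minsOf (P : Type*) [Preorder P] (S : Set P) : Set P := {x | Minimal (· ∈ S) x}

/-- The set of intersecters for `A` in `P`. -/
def inters (P : Type*) [PartialOrder P] [OrderBot P] (A : Set P) : Set P :=
  if A = ∅ then Set.univ
  else if A = {(⊥ : P)} then ∅
  else {b | ∀ a ∈ A, a ≠ ⊥ → ∃ z : P, IsAtom z ∧ z ≤ b ∧ z ≤ a}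

/-- The set of complementers for `A` in `P`. -/
def compls (P : Type*) [PartialOrder P] [OrderBot P] (A : Set P) : Set P := (inters P A)ᶜ

/-- The blocker map: the set of minimal intersecters for `A` in `P`. -/
def bmap (P : Type*) [PartialOrder P] [OrderBot P] (A : Set P) : Set P := minsOf P (inters P A)

/-- Interior of a bounded poset: elements distinct from bottom and top. -/
abbrev Interior (P : Type*) [PartialOrder P] [BoundedOrder P] : Type _ :=
  {x : P // x ≠ ⊥ ∧ x ≠ ⊤}

/-- The product of the interiors of two bounded posets, with new least and
greatest elements adjoined. -/
abbrev TruncProd (P₁ P₂ : Type*) [PartialOrder P₁] [BoundedOrder P₁]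
    [PartialOrder P₂] [BoundedOrder P₂] : Type _ :=
  WithBot (WithTop (Interior P₁ × Interior P₂))

/-- Embedding of interior pairs into the truncated product. -/
def emb (P₁ P₂ : Type*) [PartialOrder P₁] [BoundedOrder P₁]
    [PartialOrder P₂] [BoundedOrder P₂] :
    Interior P₁ × Interior P₂ → TruncProd P₁ P₂ :=
  fun p => ((p : WithTop (Interior P₁ × Interior P₂)) : TruncProd P₁ P₂)

section Aux
variable {P₁ P₂ : Type*} [PartialOrder P₁] [BoundedOrder P₁] [PartialOrder P₂] [BoundedOrder P₂]

lemma emb_le_emb {p q : Interior P₁ × Interior P₂} : emb P₁ P₂ p ≤ emb P₁ P₂ q ↔ p ≤ q := by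
  simp [emb]

lemma emb_lt_emb {p q : Interior P₁ × Interior P₂} : emb P₁ P₂ p < emb P₁ P₂ q ↔ p < q := by
  simp [emb]

lemma emb_ne_bot (p : Interior P₁ × Interior P₂) : emb P₁ P₂ p ≠ ⊥ := by
  simp [emb]

lemma emb_ne_top (p : Interior P₁ × Interior P₂) : emb P₁ P₂ p ≠ ⊤ := by
  simp [emb]

lemma trunc_trichotomy (q : TruncProd P₁ P₂) :
    q = ⊥ ∨ q = ⊤ ∨ ∃ p, q = emb P₁ P₂ p := by
  induction q using WithBot.recBotCoe with
  | bot => exact Or.inl rfl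
  | coe x =>
    induction x using WithTop.recTopCoe with
    | top => exact Or.inr (Or.inl rfl)
    | coe p => exact Or.inr (Or.inr ⟨p, rfl⟩)

lemma isAtom_emb_iff (p : Interior P₁ × Interior P₂) :
    IsAtom (emb P₁ P₂ p) ↔ IsAtom p.1.1 ∧ IsAtom p.2.1 := by
  constructor
  · rintro ⟨-, hmin⟩
    constructor
    · refine ⟨p.1.2.1, fun b hb => ?_⟩
      by_contra hb0
      have hbt : b ≠ ⊤ := fun h => not_top_lt (h ▸ hb)
      have : emb P₁ P₂ (⟨b, hb0, hbt⟩, p.2) < emb P₁ P₂ p := by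
        rw [emb_lt_emb, Prod.lt_iff]
        exact Or.inl ⟨hb, le_rfl⟩
      exact emb_ne_bot _ (hmin _ this)
    · refine ⟨p.2.2.1, fun b hb => ?_⟩
      by_contra hb0
      have hbt : b ≠ ⊤ := fun h => not_top_lt (h ▸ hb)
      have : emb P₁ P₂ (p.1, ⟨b, hb0, hbt⟩) < emb P₁ P₂ p := by
        rw [emb_lt_emb, Prod.lt_iff]
        exact Or.inr ⟨le_rfl, hb⟩
      exact emb_ne_bot _ (hmin _ this)
  · rintro ⟨h1, h2⟩
    refine ⟨emb_ne_bot p, fun b hb => ?_⟩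
    rcases trunc_trichotomy b with rfl | rfl | ⟨r, rfl⟩
    · rfl
    · exact absurd hb not_top_lt
    · exfalso
      rw [emb_lt_emb, Prod.lt_iff] at hb
      rcases hb with ⟨hlt, -⟩ | ⟨-, hlt⟩
      · exact r.1.2.1 (h1.2 _ (Subtype.coe_lt_coe.mpr hlt))
      · exact r.2.2.1 (h2.2 _ (Subtype.coe_lt_coe.mpr hlt))

end Aux

theorem stmt_7 {P₁ P₂ : Type*}
    [PartialOrder P₁] [BoundedOrder P₁] [Fintype P₁]
    [PartialOrder P₂] [BoundedOrder P₂] [Fintype P₂]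
    (hc1 : 2 < Fintype.card P₁) (hc2 : 2 < Fintype.card P₂)
    (A : Set (TruncProd P₁ P₂)) (hA : A.Nonempty)
    (hA' : ∀ q ∈ A, q ≠ ⊥ ∧ q ≠ ⊤)
    (A1 : Set P₁)
    (hA1 : A1 = {a₁ : P₁ | ∃ p : Interior P₁ × Interior P₂, emb P₁ P₂ p ∈ A ∧ p.1.1 = a₁})
    (A2 : Set P₂)
    (hA2 : A2 = {a₂ : P₂ | ∃ p : Interior P₁ × Interior P₂, emb P₁ P₂ p ∈ A ∧ p.2.1 = a₂})
    (h1 : minsOf P₁ (inters P₁ A1) ≠ {(⊤ : P₁)})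
    (h2 : minsOf P₂ (inters P₂ A2) ≠ {(⊤ : P₂)}) :
    inters (TruncProd P₁ P₂) A =
      {q : TruncProd P₁ P₂ | ∃ p : Interior P₁ × Interior P₂, q = emb P₁ P₂ p ∧
        p.1.1 ∈ inters P₁ A1 \ {(⊤ : P₁)} ∧ p.2.1 ∈ inters P₂ A2 \ {(⊤ : P₂)}} ∪ {(⊤ : TruncProd P₁ P₂)} ∧
    minsOf (TruncProd P₁ P₂) (inters (TruncProd P₁ P₂) A) =
      {q : TruncProd P₁ P₂ | ∃ p : Interior P₁ × Interior P₂, q = emb P₁ P₂ p ∧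
        p.1.1 ∈ minsOf P₁ (inters P₁ A1) ∧ p.2.1 ∈ minsOf P₂ (inters P₂ A2)} := by
  classical
  obtain ⟨a0, ha0A⟩ := hA
  obtain ⟨ha0b, ha0t⟩ := hA' a0 ha0A
  obtain ⟨p0, rfl⟩ : ∃ p, a0 = emb P₁ P₂ p := by
    rcases trunc_trichotomy a0 with rfl | rfl | h
    · exact absurd rfl ha0b
    · exact absurd rfl ha0t
    · exact h
  have hp01 : p0.1.1 ∈ A1 := by rw [hA1]; exact ⟨p0, ha0A, rfl⟩
  have hp02 : p0.2.1 ∈ A2 := by rw [hA2]; exact ⟨p0, ha0A, rfl⟩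
  have hAne : A ≠ ∅ := Set.nonempty_iff_ne_empty.mp ⟨_, ha0A⟩
  have hAnb : A ≠ {⊥} := fun h => emb_ne_bot p0 (by rw [h] at ha0A; exact ha0A)
  have hA1e : A1 ≠ ∅ := fun h => by rw [h] at hp01; exact hp01
  have hA1b : A1 ≠ {⊥} := fun h => p0.1.2.1 (by rw [h] at hp01; exact hp01)
  have hA2e : A2 ≠ ∅ := fun h => by rw [h] at hp02; exact hp02
  have hA2b : A2 ≠ {⊥} := fun h => p0.2.2.1 (by rw [h] at hp02; exact hp02)
  have hIQ : inters (TruncProd P₁ P₂) A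
      = {b | ∀ a ∈ A, a ≠ ⊥ → ∃ z, IsAtom z ∧ z ≤ b ∧ z ≤ a} := by
    rw [inters, if_neg hAne, if_neg hAnb]
  have hI1 : inters P₁ A1 = {b | ∀ a ∈ A1, a ≠ ⊥ → ∃ z, IsAtom z ∧ z ≤ b ∧ z ≤ a} := by
    rw [inters, if_neg hA1e, if_neg hA1b]
  have hI2 : inters P₂ A2 = {b | ∀ a ∈ A2, a ≠ ⊥ → ∃ z, IsAtom z ∧ z ≤ b ∧ z ≤ a} := by
    rw [inters, if_neg hA2e, if_neg hA2b]
  have atomle1 : ∀ a : P₁, a ≠ ⊥ → ∃ z, IsAtom z ∧ z ≤ a := fun a ha =>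
    (IsAtomic.eq_bot_or_exists_atom_le a).resolve_left ha
  have atomle2 : ∀ a : P₂, a ≠ ⊥ → ∃ z, IsAtom z ∧ z ≤ a := fun a ha =>
    (IsAtomic.eq_bot_or_exists_atom_le a).resolve_left ha
  have embA : ∀ a ∈ A, ∃ r : Interior P₁ × Interior P₂, a = emb P₁ P₂ r := by
    intro a haA
    rcases trunc_trichotomy a with rfl | rfl | h
    · exact absurd rfl (hA' _ haA).1
    · exact absurd rfl (hA' _ haA).2
    · exact h
  -- membership characterization for interior points
  have memQ : ∀ p : Interior P₁ × Interior P₂,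
      (emb P₁ P₂ p ∈ inters (TruncProd P₁ P₂) A ↔
        p.1.1 ∈ inters P₁ A1 ∧ p.2.1 ∈ inters P₂ A2) := by
    intro p
    rw [hIQ, hI1, hI2]
    constructor
    · intro h
      constructor
      · intro a₁ ha₁ _
        rw [hA1] at ha₁
        obtain ⟨r, hrA, hr1⟩ := ha₁
        obtain ⟨z, hz, hzb, hza⟩ := h (emb P₁ P₂ r) hrA (emb_ne_bot r)
        rcases trunc_trichotomy z with rfl | rfl | ⟨zp, rfl⟩
        · exact absurd rfl hz.1
        · exact absurd (top_le_iff.mp hza) (emb_ne_top r)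
        · have hat := (isAtom_emb_iff zp).mp hz
          rw [emb_le_emb] at hzb hza
          exact ⟨zp.1.1, hat.1, hzb.1, hr1 ▸ hza.1⟩
      · intro a₂ ha₂ _
        rw [hA2] at ha₂
        obtain ⟨r, hrA, hr2⟩ := ha₂
        obtain ⟨z, hz, hzb, hza⟩ := h (emb P₁ P₂ r) hrA (emb_ne_bot r)
        rcases trunc_trichotomy z with rfl | rfl | ⟨zp, rfl⟩
        · exact absurd rfl hz.1
        · exact absurd (top_le_iff.mp hza) (emb_ne_top r)
        · have hat := (isAtom_emb_iff zp).mp hz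
          rw [emb_le_emb] at hzb hza
          exact ⟨zp.2.1, hat.2, hzb.2, hr2 ▸ hza.2⟩
    · rintro ⟨h1', h2'⟩ a haA hab
      obtain ⟨r, rfl⟩ := embA a haA
      obtain ⟨z₁, hz₁, hz₁b, hz₁a⟩ := h1' r.1.1 (by rw [hA1]; exact ⟨r, haA, rfl⟩) r.1.2.1
      obtain ⟨z₂, hz₂, hz₂b, hz₂a⟩ := h2' r.2.1 (by rw [hA2]; exact ⟨r, haA, rfl⟩) r.2.2.1
      have hz₁t : z₁ ≠ ⊤ := fun h => p.1.2.2 (top_le_iff.mp (h ▸ hz₁b))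
      have hz₂t : z₂ ≠ ⊤ := fun h => p.2.2.2 (top_le_iff.mp (h ▸ hz₂b))
      refine ⟨emb P₁ P₂ (⟨z₁, hz₁.1, hz₁t⟩, ⟨z₂, hz₂.1, hz₂t⟩), ?_, ?_, ?_⟩
      · exact (isAtom_emb_iff _).mpr ⟨hz₁, hz₂⟩
      · exact emb_le_emb.mpr ⟨hz₁b, hz₂b⟩
      · exact emb_le_emb.mpr ⟨hz₁a, hz₂a⟩
  have htopQ : (⊤ : TruncProd P₁ P₂) ∈ inters (TruncProd P₁ P₂) A := by
    rw [hIQ]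
    intro a haA hab
    obtain ⟨r, rfl⟩ := embA a haA
    obtain ⟨z₁, hz₁, hz₁a⟩ := atomle1 r.1.1 r.1.2.1
    obtain ⟨z₂, hz₂, hz₂a⟩ := atomle2 r.2.1 r.2.2.1
    have hz₁t : z₁ ≠ ⊤ := fun h => r.1.2.2 (top_le_iff.mp (h ▸ hz₁a))
    have hz₂t : z₂ ≠ ⊤ := fun h => r.2.2.2 (top_le_iff.mp (h ▸ hz₂a))
    exact ⟨emb P₁ P₂ (⟨z₁, hz₁.1, hz₁t⟩, ⟨z₂, hz₂.1, hz₂t⟩),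
      (isAtom_emb_iff _).mpr ⟨hz₁, hz₂⟩, le_top, emb_le_emb.mpr ⟨hz₁a, hz₂a⟩⟩
  have hbotQ : (⊥ : TruncProd P₁ P₂) ∉ inters (TruncProd P₁ P₂) A := by
    rw [hIQ]
    intro h
    obtain ⟨z, hz, hzb, -⟩ := h (emb P₁ P₂ p0) ha0A (emb_ne_bot p0)
    exact hz.1 (le_bot_iff.mp hzb)
  have hbot1 : (⊥ : P₁) ∉ inters P₁ A1 := by
    rw [hI1]
    intro h
    obtain ⟨z, hz, hzb, -⟩ := h p0.1.1 hp01 p0.1.2.1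
    exact hz.1 (le_bot_iff.mp hzb)
  have hbot2 : (⊥ : P₂) ∉ inters P₂ A2 := by
    rw [hI2]
    intro h
    obtain ⟨z, hz, hzb, -⟩ := h p0.2.1 hp02 p0.2.2.1
    exact hz.1 (le_bot_iff.mp hzb)
  have htop1 : (⊤ : P₁) ∈ inters P₁ A1 := by
    rw [hI1]
    intro a ha hab
    obtain ⟨z, hz, hza⟩ := atomle1 a hab
    exact ⟨z, hz, le_top, hza⟩
  have htop2 : (⊤ : P₂) ∈ inters P₂ A2 := by
    rw [hI2]
    intro a ha hab
    obtain ⟨z, hz, hza⟩ := atomle2 a hab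
    exact ⟨z, hz, le_top, hza⟩
  have hm1 : ∃ m₁, m₁ ∈ inters P₁ A1 ∧ m₁ ≠ ⊤ ∧ m₁ ≠ ⊥ := by
    obtain ⟨m, hm⟩ : ∃ m, Minimal (· ∈ inters P₁ A1) m := by
      exact (Set.toFinite _).exists_minimal ⟨⊤, htop1⟩
    rcases eq_or_ne m ⊤ with rfl | hmt
    · exfalso
      apply h1
      have hIeq : inters P₁ A1 = {⊤} := by
        ext y
        simp only [Set.mem_singleton_iff]
        exact ⟨fun hy => top_le_iff.mp (hm.2 hy le_top), fun h => h ▸ htop1⟩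
      ext x
      simp only [minsOf, Set.mem_setOf_eq, hIeq, Set.mem_singleton_iff]
      constructor
      · intro hx
        exact hx.1
      · rintro rfl
        exact ⟨rfl, fun y hy _ => hy.ge⟩
    · exact ⟨m, hm.1, hmt, fun h => hbot1 (h ▸ hm.1)⟩
  have hm2 : ∃ m₂, m₂ ∈ inters P₂ A2 ∧ m₂ ≠ ⊤ ∧ m₂ ≠ ⊥ := by
    obtain ⟨m, hm⟩ : ∃ m, Minimal (· ∈ inters P₂ A2) m := by
      exact (Set.toFinite _).exists_minimal ⟨⊤, htop2⟩
    rcases eq_or_ne m ⊤ with rfl | hmt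
    · exfalso
      apply h2
      have hIeq : inters P₂ A2 = {⊤} := by
        ext y
        simp only [Set.mem_singleton_iff]
        exact ⟨fun hy => top_le_iff.mp (hm.2 hy le_top), fun h => h ▸ htop2⟩
      ext x
      simp only [minsOf, Set.mem_setOf_eq, hIeq, Set.mem_singleton_iff]
      constructor
      · intro hx
        exact hx.1
      · rintro rfl
        exact ⟨rfl, fun y hy _ => hy.ge⟩
    · exact ⟨m, hm.1, hmt, fun h => hbot2 (h ▸ hm.1)⟩
  constructor
  · ext q
    simp only [Set.mem_union, Set.mem_setOf_eq, Set.mem_singleton_iff, Set.mem_diff]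
    constructor
    · intro hq
      rcases trunc_trichotomy q with rfl | rfl | ⟨p, rfl⟩
      · exact absurd hq hbotQ
      · exact Or.inr rfl
      · obtain ⟨h1', h2'⟩ := (memQ p).mp hq
        exact Or.inl ⟨p, rfl, ⟨h1', p.1.2.2⟩, ⟨h2', p.2.2.2⟩⟩
    · rintro (⟨p, rfl, ⟨hp1, -⟩, ⟨hp2, -⟩⟩ | rfl)
      · exact (memQ p).mpr ⟨hp1, hp2⟩
      · exact htopQ
  · ext q
    simp only [minsOf, Set.mem_setOf_eq]
    constructor
    · intro hq
      rcases trunc_trichotomy q with rfl | rfl | ⟨p, rfl⟩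
      · exact absurd hq.1 hbotQ
      · exfalso
        obtain ⟨m₁, hm₁, hm₁t, hm₁b⟩ := hm1
        obtain ⟨m₂, hm₂, hm₂t, hm₂b⟩ := hm2
        have hmem := (memQ (⟨m₁, hm₁b, hm₁t⟩, ⟨m₂, hm₂b, hm₂t⟩)).mpr ⟨hm₁, hm₂⟩
        exact emb_ne_top _ (top_le_iff.mp (hq.2 hmem le_top))
      · obtain ⟨h1', h2'⟩ := (memQ p).mp hq.1
        refine ⟨p, rfl, ⟨h1', ?_⟩, ⟨h2', ?_⟩⟩
        · intro y hy hyle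
          have hyb : y ≠ ⊥ := fun h => hbot1 (h ▸ hy)
          have hyt : y ≠ ⊤ := fun h => p.1.2.2 (top_le_iff.mp (h ▸ hyle))
          have hmem := (memQ (⟨y, hyb, hyt⟩, p.2)).mpr ⟨hy, h2'⟩
          have hle : emb P₁ P₂ (⟨y, hyb, hyt⟩, p.2) ≤ emb P₁ P₂ p :=
            emb_le_emb.mpr ⟨hyle, le_rfl⟩
          exact (emb_le_emb.mp (hq.2 hmem hle)).1
        · intro y hy hyle
          have hyb : y ≠ ⊥ := fun h => hbot2 (h ▸ hy)
          have hyt : y ≠ ⊤ := fun h => p.2.2.2 (top_le_iff.mp (h ▸ hyle))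
          have hmem := (memQ (p.1, ⟨y, hyb, hyt⟩)).mpr ⟨h1', hy⟩
          have hle : emb P₁ P₂ (p.1, ⟨y, hyb, hyt⟩) ≤ emb P₁ P₂ p :=
            emb_le_emb.mpr ⟨le_rfl, hyle⟩
          exact (emb_le_emb.mp (hq.2 hmem hle)).2
    · rintro ⟨p, rfl, hp1, hp2⟩
      refine ⟨(memQ p).mpr ⟨hp1.1, hp2.1⟩, ?_⟩
      intro y hy hyle
      rcases trunc_trichotomy y with rfl | rfl | ⟨r, rfl⟩
      · exact absurd hy hbotQ
      · exact absurd (top_le_iff.mp hyle) (emb_ne_top p)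
      · obtain ⟨hr1, hr2⟩ := (memQ r).mp hy
        rw [emb_le_emb] at hyle ⊢
        exact ⟨hp1.2 hr1 hyle.1, hp2.2 hr2 hyle.2⟩
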